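/- Let k be a field of characteristic zero and let R be a k-algebra which is a domain such that the set of nonzero elements of R is a left and right Ore set; let D = Fract(R) be the Ore localization of R at its nonzero elements (a division ring). Let C be a commutative k-subalgebra of the center of R such that R is free as a C-module. Suppose there exists a family Ω of prime ideals of C with ⋂_{E ∈ Ω} E = 0 such that for every E ∈ Ω, writing I_E = RE for the two-sided ideal of R generated by E and R_E = R/I_E, the ring R_E is a domain whose set of nonzero elements is a left and right Ore set, and R_E is finitely generated as a module over its center Z_E. Then R is pure quantum: there exist no elements x, y ∈ D with x*y − y*x = 1. -/

import Mathlib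

lemma aux_extract {R D : Type*} [Ring R] [IsDomain R] [DivisionRing D]
    (hOreL : ∀ r s : R, s ≠ 0 → ∃ r' s' : R, s' ≠ 0 ∧ s' * r = r' * s)
    (φ : R →+* D) (hφ : Function.Injective φ)
    (hfracL : ∀ x : D, ∃ r s : R, s ≠ 0 ∧ x = (φ s)⁻¹ * φ r)
    {x y : D} (hxy : x * y - y * x = 1) :
    ∃ A B c c₁ A₁ c₂ B₂ q p e : R,
      c ≠ 0 ∧ c₁ ≠ 0 ∧ c₂ ≠ 0 ∧ q ≠ 0 ∧ p ≠ 0 ∧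
      c₁ * A = A₁ * c ∧ c₂ * B = B₂ * c ∧
      e = q * (c₁ * c) ∧ e = p * (c₂ * c) ∧
      q * (A₁ * B) - p * (B₂ * A) = e := by
  have φne : ∀ r : R, r ≠ 0 → φ r ≠ 0 := fun r h h0 => h (hφ (by rw [h0, map_zero]))
  -- reduction lemma : (φ (u*s))⁻¹ * φ (u*a) = (φ s)⁻¹ * φ a
  have red : ∀ u s a : R, u ≠ 0 → (φ (u * s))⁻¹ * φ (u * a) = (φ s)⁻¹ * φ a := by
    intro u s a hu
    rw [map_mul, map_mul, mul_inv_rev, mul_assoc, ← mul_assoc (φ u)⁻¹,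
      inv_mul_cancel₀ (φne u hu), one_mul]
  -- swap lemma
  have swap : ∀ A' c' A₁' c₁' : R, c' ≠ 0 → c₁' ≠ 0 → c₁' * A' = A₁' * c' →
      φ A' * (φ c')⁻¹ = (φ c₁')⁻¹ * φ A₁' := by
    intro A' c' A₁' c₁' hc' hc₁' h
    have hφh : φ c₁' * φ A' = φ A₁' * φ c' := by rw [← map_mul, ← map_mul, h]
    calc φ A' * (φ c')⁻¹ = ((φ c₁')⁻¹ * φ c₁') * (φ A' * (φ c')⁻¹) := by
          rw [inv_mul_cancel₀ (φne _ hc₁'), one_mul]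
    _ = (φ c₁')⁻¹ * ((φ c₁' * φ A') * (φ c')⁻¹) := by
          rw [mul_assoc, mul_assoc]
    _ = (φ c₁')⁻¹ * (φ A₁' * (φ c' * (φ c')⁻¹)) := by rw [hφh, mul_assoc]
    _ = (φ c₁')⁻¹ * φ A₁' := by rw [mul_inv_cancel₀ (φne _ hc'), mul_one]
  obtain ⟨a, s, hs, hx⟩ := hfracL x
  obtain ⟨b, t, ht, hy⟩ := hfracL y
  obtain ⟨w, u, hu, hust⟩ := hOreL s t ht
  have hc : u * s ≠ 0 := mul_ne_zero hu hs
  have hw : w ≠ 0 := by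
    intro h0
    rw [h0, zero_mul] at hust
    exact hc hust
  set c := u * s with hcdef
  set A := u * a with hAdef
  set B := w * b with hBdef
  have hxc : x = (φ c)⁻¹ * φ A := by rw [hx, hcdef, hAdef, red u s a hu]
  have hyc : y = (φ c)⁻¹ * φ B := by
    rw [hy, hBdef, ← red w t b hw, ← hust]
  clear_value c A B
  clear hcdef hAdef hBdef hust hx hy
  obtain ⟨A₁, c₁, hc₁, h1⟩ := hOreL A c hc
  obtain ⟨B₂, c₂, hc₂, h2⟩ := hOreL B c hc
  obtain ⟨p, q, hq, h3⟩ := hOreL (c₁ * c) (c₂ * c) (mul_ne_zero hc₂ hc)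
  set e := q * (c₁ * c) with hedef
  have he : e ≠ 0 := mul_ne_zero hq (mul_ne_zero hc₁ hc)
  have hp : p ≠ 0 := by
    intro h0
    rw [h0, zero_mul] at h3
    exact he h3
  clear_value e
  have hxyD : x * y = (φ e)⁻¹ * φ (q * (A₁ * B)) := by
    rw [hxc, hyc]
    calc (φ c)⁻¹ * φ A * ((φ c)⁻¹ * φ B)
        = (φ c)⁻¹ * ((φ A * (φ c)⁻¹) * φ B) := by
          rw [mul_assoc, ← mul_assoc (φ A)]
    _ = (φ c)⁻¹ * ((φ c₁)⁻¹ * (φ A₁ * φ B)) := by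
          rw [swap A c A₁ c₁ hc hc₁ h1, mul_assoc]
    _ = ((φ c₁) * (φ c))⁻¹ * φ (A₁ * B) := by
          rw [mul_inv_rev, map_mul, mul_assoc]
    _ = (φ (c₁ * c))⁻¹ * φ (A₁ * B) := by rw [map_mul φ c₁ c]
    _ = (φ (q * (c₁ * c)))⁻¹ * φ (q * (A₁ * B)) := by rw [red q (c₁ * c) (A₁ * B) hq]
    _ = (φ e)⁻¹ * φ (q * (A₁ * B)) := by rw [← hedef]
  have hyxD : y * x = (φ e)⁻¹ * φ (p * (B₂ * A)) := by
    rw [hyc, hxc]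
    calc (φ c)⁻¹ * φ B * ((φ c)⁻¹ * φ A)
        = (φ c)⁻¹ * ((φ B * (φ c)⁻¹) * φ A) := by
          rw [mul_assoc, ← mul_assoc (φ B)]
    _ = (φ c)⁻¹ * ((φ c₂)⁻¹ * (φ B₂ * φ A)) := by
          rw [swap B c B₂ c₂ hc hc₂ h2, mul_assoc]
    _ = ((φ c₂) * (φ c))⁻¹ * φ (B₂ * A) := by
          rw [mul_inv_rev, map_mul, mul_assoc]
    _ = (φ (c₂ * c))⁻¹ * φ (B₂ * A) := by rw [map_mul φ c₂ c]
    _ = (φ (p * (c₂ * c)))⁻¹ * φ (p * (B₂ * A)) := by rw [red p (c₂ * c) (B₂ * A) hp]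
    _ = (φ e)⁻¹ * φ (p * (B₂ * A)) := by rw [← h3]
  have key : q * (A₁ * B) - p * (B₂ * A) = e := by
    apply hφ
    have h1' : (φ e)⁻¹ * (φ (q * (A₁ * B)) - φ (p * (B₂ * A))) = 1 := by
      rw [mul_sub, ← hxyD, ← hyxD, hxy]
    have := congrArg (fun z => φ e * z) h1'
    simp only [mul_one] at this
    rw [← mul_assoc, mul_inv_cancel₀ (φne e he), one_mul] at this
    rw [map_sub, this]
  exact ⟨A, B, c, c₁, A₁, c₂, B₂, q, p, e, hc, hc₁, hc₂, hq, hp, h1, h2, hedef, h3, key⟩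

lemma aux_mul_mem {C R : Type*} [CommRing C] [Ring R] [Algebra C R] (E : Ideal C)
    {x : R} (hx : x ∈ Ideal.map (algebraMap C R) E) (b : R) :
    x * b ∈ Ideal.map (algebraMap C R) E := by
  rw [Ideal.map] at hx ⊢
  induction hx using Submodule.span_induction with
  | mem y hy =>
      obtain ⟨c, hc, rfl⟩ := hy
      rw [Algebra.commutes c b]
      exact Ideal.mul_mem_left _ b (Ideal.subset_span ⟨c, hc, rfl⟩)
  | zero => simp
  | add u v _ _ hu hv => rw [add_mul]; exact Submodule.add_mem _ hu hv
  | smul r u _ hu =>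
      rw [smul_eq_mul, mul_assoc]
      exact Ideal.mul_mem_left _ r hu

lemma aux_repr_mem {C R ι : Type*} [CommRing C] [Ring R] [Algebra C R]
    (bR : Module.Basis ι C R) (E : Ideal C)
    {x : R} (hx : x ∈ Ideal.map (algebraMap C R) E) : ∀ i, bR.repr x i ∈ E := by
  rw [Ideal.map] at hx
  induction hx using Submodule.span_induction with
  | mem y hy =>
      obtain ⟨c, hc, rfl⟩ := hy
      intro i
      rw [Algebra.algebraMap_eq_smul_one, map_smul, Finsupp.smul_apply, smul_eq_mul]
      exact Ideal.mul_mem_right _ E hc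
  | zero => intro i; simp
  | add u v _ _ hu hv => intro i; rw [map_add, Finsupp.add_apply]; exact E.add_mem (hu i) (hv i)
  | smul r u hu' hu =>
      intro i
      have hrw : r • u = ∑ j ∈ (bR.repr u).support, bR.repr u j • (r * bR j) := by
        conv_lhs => rw [← bR.linearCombination_repr u]
        rw [Finsupp.linearCombination_apply, Finsupp.sum, smul_eq_mul, Finset.mul_sum]
        exact Finset.sum_congr rfl fun j _ => mul_smul_comm _ _ _
      rw [hrw, map_sum, Finsupp.finset_sum_apply]
      refine Submodule.sum_mem _ fun j hj => ?_
      rw [map_smul, Finsupp.smul_apply, smul_eq_mul]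
      exact Ideal.mul_mem_right _ E (hu j)

lemma aux_comm_one {T : Type*} [Ring T] {A B c c₁ A₁ c₂ B₂ q p e ic ic₁ ic₂ iq ip : T}
    (hcl : ic * c = 1) (hcr : c * ic = 1)
    (hc₁l : ic₁ * c₁ = 1) (hc₁r : c₁ * ic₁ = 1)
    (hc₂l : ic₂ * c₂ = 1) (hc₂r : c₂ * ic₂ = 1)
    (hql : iq * q = 1) (hqr : q * iq = 1)
    (hpl : ip * p = 1) (hpr : p * ip = 1)
    (h1 : c₁ * A = A₁ * c) (h2 : c₂ * B = B₂ * c)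
    (h3 : e = q * (c₁ * c)) (h4 : e = p * (c₂ * c))
    (h5 : q * (A₁ * B) - p * (B₂ * A) = e) :
    (ic * A) * (ic * B) - (ic * B) * (ic * A) = 1 := by
  have e1 : A * ic = ic₁ * A₁ := by
    calc A * ic = (ic₁ * c₁) * (A * ic) := by rw [hc₁l, one_mul]
    _ = ic₁ * (c₁ * A * ic) := by rw [mul_assoc ic₁ c₁, ← mul_assoc c₁ A]
    _ = ic₁ * A₁ := by rw [h1, mul_assoc A₁, hcr, mul_one]
  have e2 : B * ic = ic₂ * B₂ := by
    calc B * ic = (ic₂ * c₂) * (B * ic) := by rw [hc₂l, one_mul]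
    _ = ic₂ * (c₂ * B * ic) := by rw [mul_assoc ic₂ c₂, ← mul_assoc c₂ B]
    _ = ic₂ * B₂ := by rw [h2, mul_assoc B₂, hcr, mul_one]
  set ie := ic * (ic₁ * iq) with hie
  have hier : e * (ic * (ic₁ * iq)) = 1 := by
    rw [h3]
    calc q * (c₁ * c) * (ic * (ic₁ * iq))
        = q * (c₁ * ((c * ic) * (ic₁ * iq))) := by
          rw [mul_assoc q, mul_assoc c₁, ← mul_assoc c ic]
    _ = q * ((c₁ * ic₁) * iq) := by rw [hcr, one_mul, ← mul_assoc c₁]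
    _ = 1 := by rw [hc₁r, one_mul, hqr]
  have hiel : (ic * (ic₁ * iq)) * e = 1 := by
    rw [h3]
    calc (ic * (ic₁ * iq)) * (q * (c₁ * c))
        = ic * (ic₁ * ((iq * q) * (c₁ * c))) := by
          rw [mul_assoc ic, mul_assoc ic₁, ← mul_assoc iq q]
    _ = ic * ((ic₁ * c₁) * c) := by rw [hql, one_mul, ← mul_assoc ic₁]
    _ = 1 := by rw [hc₁l, one_mul, hcl]
  have hie' : ic * (ic₂ * ip) = ie := by
    have hier2 : e * (ic * (ic₂ * ip)) = 1 := by
      rw [h4]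
      calc p * (c₂ * c) * (ic * (ic₂ * ip))
          = p * (c₂ * ((c * ic) * (ic₂ * ip))) := by
            rw [mul_assoc p, mul_assoc c₂, ← mul_assoc c ic]
      _ = p * ((c₂ * ic₂) * ip) := by rw [hcr, one_mul, ← mul_assoc c₂]
      _ = 1 := by rw [hc₂r, one_mul, hpr]
    calc ic * (ic₂ * ip) = (ie * e) * (ic * (ic₂ * ip)) := by rw [hiel, one_mul]
    _ = ie * (e * (ic * (ic₂ * ip))) := by rw [mul_assoc]
    _ = ie := by rw [hier2, mul_one]
  have hX : (ic * A) * (ic * B) = ie * (q * (A₁ * B)) := by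
    calc (ic * A) * (ic * B) = ic * ((A * ic) * B) := by
          rw [mul_assoc ic A, ← mul_assoc A ic]
    _ = ic * (ic₁ * ((iq * q) * (A₁ * B))) := by
          rw [e1, hql, one_mul, mul_assoc ic₁]
    _ = ie * (q * (A₁ * B)) := by
          rw [hie, mul_assoc ic, mul_assoc ic₁, mul_assoc iq]
  have hY : (ic * B) * (ic * A) = ie * (p * (B₂ * A)) := by
    calc (ic * B) * (ic * A) = ic * ((B * ic) * A) := by
          rw [mul_assoc ic B, ← mul_assoc B ic]
    _ = ic * (ic₂ * ((ip * p) * (B₂ * A))) := by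
          rw [e2, hpl, one_mul, mul_assoc ic₂]
    _ = (ic * (ic₂ * ip)) * (p * (B₂ * A)) := by
          rw [mul_assoc ic, mul_assoc ic₂, mul_assoc ip]
    _ = ie * (p * (B₂ * A)) := by rw [hie']
  rw [hX, hY, ← mul_sub, h5, hiel]

set_option maxHeartbeats 1600000 in
set_option synthInstance.maxHeartbeats 400000 in
lemma aux_main {R : Type*} [Ring R] (I : Ideal R)
    (Itwo : ∀ x ∈ I, ∀ b : R, x * b ∈ I)
    (h1I : (1:R) ∉ I)
    (hdom : ∀ a b : R, a * b ∈ I → a ∈ I ∨ b ∈ I)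
    (hnat : ∀ n : ℕ, n ≠ 0 → IsUnit (n : R))
    (hfg : ∃ (m : ℕ) (v : Fin m → R), ∀ r : R, ∃ z : Fin m → R,
        (∀ j, ∀ w : R, z j * w - w * z j ∈ I) ∧ r - ∑ j, z j * v j ∈ I)
    {A B c c₁ A₁ c₂ B₂ q p e : R}
    (hc : c ∉ I) (hc₁ : c₁ ∉ I) (hc₂ : c₂ ∉ I) (hq : q ∉ I) (hp : p ∉ I)
    (r1 : c₁ * A = A₁ * c) (r2 : c₂ * B = B₂ * c)
    (r3 : e = q * (c₁ * c)) (r4 : e = p * (c₂ * c))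
    (r5 : q * (A₁ * B) - p * (B₂ * A) = e) : False := by
  classical
  -- the quotient ring B' := R / I as a RingCon quotient
  let cc : RingCon R :=
    { r := fun a b => a - b ∈ I
      iseqv := ⟨fun a => by simp, fun {a b} h => by simpa using I.neg_mem h,
        fun {a b c} h1 h2 => by simpa using I.add_mem h1 h2⟩
      add' := fun {a b c d} h1 h2 => by
        have := I.add_mem h1 h2
        simpa [add_sub_add_comm] using this
      mul' := fun {a b c d} h1 h2 => by
        have h1' : a - b ∈ I := h1
        have h2' : c - d ∈ I := h2
        show a * c - b * d ∈ I
        have key : a * c - b * d = a * (c - d) + (a - b) * d := by noncomm_ring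
        rw [key]
        exact I.add_mem (by simpa [smul_eq_mul] using I.smul_mem a h2')
          (Itwo _ h1' d) }
  let B' := cc.Quotient
  let π : R →+* B' :=
    { toFun := fun r => (r : B')
      map_one' := rfl
      map_mul' := fun _ _ => rfl
      map_zero' := rfl
      map_add' := fun _ _ => rfl }
  have hπsurj : Function.Surjective π := fun z => Quotient.exists_rep z
  have hπeq : ∀ a b : R, π a = π b ↔ a - b ∈ I := fun a b => RingCon.eq cc
  have hπ0 : ∀ a : R, π a = 0 ↔ a ∈ I := by
    intro a
    have : (0 : B') = π 0 := rfl
    rw [this, hπeq, sub_zero]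
  -- B' is a domain
  haveI : Nontrivial B' := ⟨π 1, π 0, fun h => h1I (by simpa using (hπeq 1 0).1 h)⟩
  haveI : NoZeroDivisors B' := by
    constructor
    intro a b hab
    obtain ⟨a', rfl⟩ := hπsurj a
    obtain ⟨b', rfl⟩ := hπsurj b
    rw [← map_mul, hπ0] at hab
    rcases hdom a' b' hab with h | h
    · exact Or.inl ((hπ0 a').2 h)
    · exact Or.inr ((hπ0 b').2 h)
  haveI : IsDomain B' := NoZeroDivisors.to_isDomain _
  haveI : CharZero B' := by
    refine ⟨fun m n hmn => ?_⟩
    wlog hle : n ≤ m generalizing m n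
    · exact (this n m hmn.symm (le_of_not_ge hle)).symm
    have hmn' : ((m - n : ℕ) : B') = 0 := by
      push_cast [Nat.cast_sub hle] at hmn ⊢
      exact (Nat.cast_sub hle).trans (sub_eq_zero.mpr hmn)
    by_contra hne
    have hd : m - n ≠ 0 := fun h => hne (Nat.le_antisymm (Nat.le_of_sub_eq_zero h) hle)
    have : ((m - n : ℕ) : R) ∈ I := by
      rw [← hπ0]
      rw [map_natCast π]
      exact hmn'
    obtain ⟨un, hun⟩ := hnat (m - n) hd
    have h1 : (1 : R) ∈ I := by
      have := Itwo _ this ((un⁻¹ : Rˣ) : R)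
      rw [← hun] at this
      simpa [Units.mul_inv] using this
    exact h1I h1
  -- the center and its fraction field
  let Z := Subring.center B'
  haveI : IsDomain Z := NoZeroDivisors.to_isDomain _
  let S := nonZeroDivisors Z
  let K := FractionRing Z
  haveI : CharZero K := charZero_of_injective_algebraMap
    (IsFractionRing.injective Z K)
  let V := LocalizedModule S B'
  have hSne : ∀ u : S, ((u : Z) : B') ≠ 0 := by
    intro u h0
    have : (u : Z) = 0 := Subtype.ext h0
    have h0S : (0 : Z) ∈ S := this ▸ u.2
    exact zero_notMem_nonZeroDivisors h0S
  -- left multiplication as Z-linear maps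
  have hcen : ∀ (z : Z) (b : B'), b * (z : B') = (z : B') * b :=
    fun z b => Subring.mem_center_iff.mp z.2 b
  let mulL : B' → B' →ₗ[Z] B' := fun b =>
    { toFun := fun x => b * x
      map_add' := fun x y => mul_add b x y
      map_smul' := fun z x => by
        simp only [RingHom.id_apply]
        show b * ((z : B') * x) = (z : B') * (b * x)
        rw [← mul_assoc, hcen z b, mul_assoc] }
  let mk1 := LocalizedModule.mkLinearMap S B'
  let lift0 : (B' →ₗ[Z] B') → (V →ₗ[Z] V) := fun f => IsLocalizedModule.map S mk1 mk1 f
  have lift0_mk : ∀ (f : B' →ₗ[Z] B') (m : B') (s : S),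
      lift0 f (LocalizedModule.mk m s) = LocalizedModule.mk (f m) s := by
    intro f m s
    rw [IsLocalizedModule.mk_eq_mk', IsLocalizedModule.mk_eq_mk', IsLocalizedModule.map_mk']
  have mk_add : ∀ (x y : B') (s : S),
      LocalizedModule.mk (x + y) s = LocalizedModule.mk x s + LocalizedModule.mk y s := by
    intro x y s
    rw [LocalizedModule.mk_add_mk]
    apply LocalizedModule.mk_eq.mpr
    exact ⟨1, by rw [one_smul, one_smul, mul_smul, smul_add]⟩
  have lift0_Ksmul : ∀ (f : B' →ₗ[Z] B') (κ : K) (w : V),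
      lift0 f (κ • w) = κ • lift0 f w := by
    intro f κ w
    induction κ using Localization.induction_on with
    | _ zs =>
      induction w using LocalizedModule.induction_on with
      | _ m s =>
        rw [LocalizedModule.mk_smul_mk, lift0_mk, lift0_mk, LocalizedModule.mk_smul_mk, map_smul]
  let ρ : B' →+* Module.End K V :=
    { toFun := fun b =>
        { toFun := lift0 (mulL b)
          map_add' := fun w w' => map_add _ w w'
          map_smul' := fun κ w => lift0_Ksmul (mulL b) κ w }
      map_one' := by
        apply LinearMap.ext; intro w
        induction w using LocalizedModule.induction_on with
        | _ m s =>
          show lift0 (mulL 1) (LocalizedModule.mk m s) = LocalizedModule.mk m s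
          rw [lift0_mk]
          show LocalizedModule.mk (1 * m) s = LocalizedModule.mk m s
          rw [one_mul]
      map_mul' := fun a b => by
        apply LinearMap.ext; intro w
        induction w using LocalizedModule.induction_on with
        | _ m s =>
          show lift0 (mulL (a * b)) (LocalizedModule.mk m s)
            = lift0 (mulL a) (lift0 (mulL b) (LocalizedModule.mk m s))
          rw [lift0_mk, lift0_mk, lift0_mk]
          show LocalizedModule.mk ((a * b) * m) s = LocalizedModule.mk (a * (b * m)) s
          rw [mul_assoc]
      map_zero' := by
        apply LinearMap.ext; intro w
        induction w using LocalizedModule.induction_on with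
        | _ m s =>
          show lift0 (mulL 0) (LocalizedModule.mk m s) = 0
          rw [lift0_mk]
          show LocalizedModule.mk (0 * m) s = 0
          rw [zero_mul, LocalizedModule.zero_mk]
      map_add' := fun a b => by
        apply LinearMap.ext; intro w
        induction w using LocalizedModule.induction_on with
        | _ m s =>
          show lift0 (mulL (a + b)) (LocalizedModule.mk m s)
            = lift0 (mulL a) (LocalizedModule.mk m s) + lift0 (mulL b) (LocalizedModule.mk m s)
          rw [lift0_mk, lift0_mk, lift0_mk]
          show LocalizedModule.mk ((a + b) * m) s
            = LocalizedModule.mk (a * m) s + LocalizedModule.mk (b * m) s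
          rw [add_mul, mk_add] }
  have ρ_apply : ∀ (b : B') (m : B') (s : S),
      ρ b (LocalizedModule.mk m s) = LocalizedModule.mk (b * m) s := by
    intro b m s
    show lift0 (mulL b) (LocalizedModule.mk m s) = _
    rw [lift0_mk]; rfl
  -- V is nontrivial
  haveI : Nontrivial V := by
    refine ⟨LocalizedModule.mk (π 1) 1, 0, fun h => ?_⟩
    rw [← LocalizedModule.zero_mk (1 : S), LocalizedModule.mk_eq] at h
    obtain ⟨u, hu⟩ := h
    rw [one_smul, one_smul, smul_zero, Submonoid.smul_def] at hu
    have : ((u : Z) : B') * (π 1) = 0 := hu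
    rcases mul_eq_zero.mp this with h' | h'
    · exact hSne u h'
    · exact h1I ((hπ0 1).1 h')
  -- V is finite dimensional over K
  obtain ⟨n, v, hv⟩ := hfg
  have mk_zsmul : ∀ (ζ : Z) (x : B'),
      LocalizedModule.mk ((ζ : B') * x) (1 : S)
        = algebraMap Z K ζ • LocalizedModule.mk x (1 : S) := by
    intro ζ x
    rw [← Localization.mk_one_eq_algebraMap, LocalizedModule.mk_smul_mk, one_mul]
    rfl
  have hspan : (⊤ : Submodule K V)
      ≤ Submodule.span K (Set.range fun j => LocalizedModule.mk (π (v j)) (1 : S)) := by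
    rintro w -
    induction w using LocalizedModule.induction_on with
    | _ m s =>
      obtain ⟨r, rfl⟩ := hπsurj m
      have step1 : LocalizedModule.mk (π r) s
          = Localization.mk (1 : Z) s • LocalizedModule.mk (π r) (1 : S) := by
        rw [LocalizedModule.mk_smul_mk, one_smul, mul_one]
      rw [step1]
      refine Submodule.smul_mem _ _ ?_
      obtain ⟨z, hzc, hzr⟩ := hv r
      have hπr : π r = ∑ j : Fin n, π (z j) * π (v j) := by
        have : π r = π (∑ j : Fin n, z j * v j) := (hπeq _ _).mpr hzr
        rw [this, map_sum]
        exact Finset.sum_congr rfl fun j _ => map_mul π _ _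
      rw [hπr]
      have expand : LocalizedModule.mk (∑ j : Fin n, π (z j) * π (v j)) (1 : S)
          = ∑ j : Fin n, LocalizedModule.mk (π (z j) * π (v j)) (1 : S) := by
        classical
        induction (Finset.univ : Finset (Fin n)) using Finset.induction_on with
        | empty => simp [LocalizedModule.zero_mk]
        | insert _ _ hj ih =>
          rw [Finset.sum_insert hj, Finset.sum_insert hj, mk_add, ih]
      rw [expand]
      refine Submodule.sum_mem _ fun j _ => ?_
      have hzj : π (z j) ∈ Subring.center B' := by
        rw [Subring.mem_center_iff]
        intro g
        obtain ⟨w', rfl⟩ := hπsurj g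
        rw [← map_mul, ← map_mul]
        exact ((hπeq _ _).mpr (hzc j w')).symm
      have : LocalizedModule.mk (π (z j) * π (v j)) (1 : S)
          = algebraMap Z K ⟨π (z j), hzj⟩ • LocalizedModule.mk (π (v j)) (1 : S) :=
        mk_zsmul ⟨π (z j), hzj⟩ (π (v j))
      rw [this]
      exact Submodule.smul_mem _ _ (Submodule.subset_span ⟨j, rfl⟩)
  haveI : Module.Finite K V := by
    refine ⟨⟨Finset.univ.image (fun j => LocalizedModule.mk (π (v j)) (1 : S)), ?_⟩⟩
    rw [eq_top_iff, Finset.coe_image, Finset.coe_univ, Set.image_univ]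
    exact hspan
  haveI : FiniteDimensional K V := inferInstance
  -- nonzero elements of B' act invertibly on V
  have unit_of : ∀ r : R, r ∉ I → IsUnit (ρ (π r)) := by
    intro r hr
    have hbne : π r ≠ 0 := fun h => hr ((hπ0 r).1 h)
    have hinj : Function.Injective (ρ (π r)) := by
      rw [← LinearMap.ker_eq_bot]
      apply LinearMap.ker_eq_bot'.mpr
      intro w hw
      induction w using LocalizedModule.induction_on with
      | _ m s =>
        rw [ρ_apply] at hw
        rw [← LocalizedModule.zero_mk (1 : S), LocalizedModule.mk_eq] at hw
        obtain ⟨u, hu⟩ := hw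
        simp only [one_smul, smul_zero, Submonoid.smul_def] at hu
        have hu' : ((u : Z) : B') * (π r * m) = 0 := hu
        have h2 : π r * m = 0 := by
          rcases mul_eq_zero.mp hu' with h' | h'
          · exact absurd h' (hSne u)
          · exact h'
        have h3 : m = 0 := by
          rcases mul_eq_zero.mp h2 with h' | h'
          · exact absurd h' hbne
          · exact h'
        rw [h3, LocalizedModule.zero_mk]
    have hsurj : Function.Surjective (ρ (π r)) :=
      LinearMap.injective_iff_surjective.mp hinj
    let eqv := LinearEquiv.ofBijective (ρ (π r)) ⟨hinj, hsurj⟩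
    refine ⟨⟨ρ (π r), eqv.symm.toLinearMap, ?_, ?_⟩, rfl⟩
    · apply LinearMap.ext; intro w
      rw [Module.End.mul_apply]
      show (ρ (π r)) (eqv.symm w) = w
      have : (ρ (π r)) (eqv.symm w) = eqv (eqv.symm w) := rfl
      rw [this, LinearEquiv.apply_symm_apply]
    · apply LinearMap.ext; intro w
      rw [Module.End.mul_apply]
      show eqv.symm ((ρ (π r)) w) = w
      have : (ρ (π r)) w = eqv w := rfl
      rw [this, LinearEquiv.symm_apply_apply]
  -- transport the relations into the endomorphism ring and conclude
  let σ : R → Module.End K V := fun r => ρ (π r)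
  have σmul : ∀ a b : R, σ (a * b) = σ a * σ b := fun a b => by
    show ρ (π (a * b)) = _
    rw [map_mul, map_mul]
  obtain ⟨uc, huc0⟩ := unit_of c hc
  obtain ⟨uc₁, huc₁0⟩ := unit_of c₁ hc₁
  obtain ⟨uc₂, huc₂0⟩ := unit_of c₂ hc₂
  obtain ⟨uq, huq0⟩ := unit_of q hq
  obtain ⟨up, hup0⟩ := unit_of p hp
  have huc : (uc : Module.End K V) = σ c := huc0
  have huc₁ : (uc₁ : Module.End K V) = σ c₁ := huc₁0
  have huc₂ : (uc₂ : Module.End K V) = σ c₂ := huc₂0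
  have huq : (uq : Module.End K V) = σ q := huq0
  have hup : (up : Module.End K V) = σ p := hup0
  have hXY : ((uc⁻¹ : (Module.End K V)ˣ) * σ A) * ((uc⁻¹ : (Module.End K V)ˣ) * σ B)
      - ((uc⁻¹ : (Module.End K V)ˣ) * σ B) * ((uc⁻¹ : (Module.End K V)ˣ) * σ A) = 1 := by
    refine aux_comm_one (c := σ c) (c₁ := σ c₁) (c₂ := σ c₂) (q := σ q) (p := σ p)
      (e := σ e) (A₁ := σ A₁) (B₂ := σ B₂) (ic := ((uc⁻¹ : (Module.End K V)ˣ) : Module.End K V))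
      (ic₁ := ((uc₁⁻¹ : (Module.End K V)ˣ) : Module.End K V))
      (ic₂ := ((uc₂⁻¹ : (Module.End K V)ˣ) : Module.End K V))
      (iq := ((uq⁻¹ : (Module.End K V)ˣ) : Module.End K V))
      (ip := ((up⁻¹ : (Module.End K V)ˣ) : Module.End K V))
      ?_ ?_ ?_ ?_ ?_ ?_ ?_ ?_ ?_ ?_ ?_ ?_ ?_ ?_ ?_
    · rw [← huc]; exact uc.inv_mul
    · rw [← huc]; exact uc.mul_inv
    · rw [← huc₁]; exact uc₁.inv_mul
    · rw [← huc₁]; exact uc₁.mul_inv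
    · rw [← huc₂]; exact uc₂.inv_mul
    · rw [← huc₂]; exact uc₂.mul_inv
    · rw [← huq]; exact uq.inv_mul
    · rw [← huq]; exact uq.mul_inv
    · rw [← hup]; exact up.inv_mul
    · rw [← hup]; exact up.mul_inv
    · rw [← σmul, ← σmul, r1]
    · rw [← σmul, ← σmul, r2]
    · rw [← σmul, ← σmul, ← r3]
    · rw [← σmul, ← σmul, ← r4]
    · show σ q * (σ A₁ * σ B) - σ p * (σ B₂ * σ A) = σ e
      rw [← σmul, ← σmul, ← σmul, ← σmul]
      show ρ (π (q * (A₁ * B))) - ρ (π (p * (B₂ * A))) = ρ (π e)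
      rw [← map_sub ρ, ← map_sub π, r5]
  have htr := congrArg (LinearMap.trace K V) hXY
  rw [map_sub (LinearMap.trace K V), LinearMap.trace_mul_comm, sub_self, LinearMap.trace_one] at htr
  have hpos : 0 < Module.finrank K V := Module.finrank_pos
  have : ((Module.finrank K V : ℕ) : K) ≠ 0 := Nat.cast_ne_zero.mpr hpos.ne'
  exact this htr.symm


/-- Theorem 2.3: let `k` be a field of characteristic zero, `R` a `k`-algebra
which is a domain whose nonzero elements form a left and right Ore set, and
`D = Fract R` its division ring of fractions (given by an embedding
`φ : R →+* D` such that every element of `D` is a left and a right fraction).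
Let `C` be a commutative `k`-subalgebra of the center of `R` (modelled by an
injective algebra map `C → R`, centrality being part of the `Algebra C R`
structure) with `R` free as a `C`-module. Suppose `Ω` is a family of prime
ideals of `C` with zero intersection such that, for every `E ∈ Ω`, with
`I_E = R·E` the ideal of `R` generated by `E`:
* `R_E = R/I_E` is a domain (here: `1 ∉ I_E` and `a*b ∈ I_E → a ∈ I_E ∨ b ∈ I_E`),
* the nonzero elements of `R_E` form a left and right Ore set (stated mod `I_E`),
* `R_E` is finitely generated as a module over its center `Z_E` (stated via
  lifts: finitely many `v j ∈ R` such that every `r ∈ R` is, mod `I_E`, a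
  combination `∑ z j * v j` with each `z j` central mod `I_E`).
Then `R` is pure quantum: there are no `x, y ∈ D` with `x*y - y*x = 1`. -/
theorem pure_quantum_of_pure_Q_algebra
    {k C R D : Type*} [Field k] [CharZero k]
    [CommRing C] [Ring R] [IsDomain R] [DivisionRing D]
    [Algebra k C] [Algebra k R] [Algebra C R] [IsScalarTower k C R]
    (hCinj : Function.Injective (algebraMap C R))
    [Module.Free C R]
    (hOreR : ∀ r s : R, s ≠ 0 → ∃ r' s' : R, s' ≠ 0 ∧ r * s' = s * r')
    (hOreL : ∀ r s : R, s ≠ 0 → ∃ r' s' : R, s' ≠ 0 ∧ s' * r = r' * s)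
    (φ : R →+* D) (hφ : Function.Injective φ)
    (hfracR : ∀ x : D, ∃ r s : R, s ≠ 0 ∧ x = φ r * (φ s)⁻¹)
    (hfracL : ∀ x : D, ∃ r s : R, s ≠ 0 ∧ x = (φ s)⁻¹ * φ r)
    (Ω : Set (Ideal C)) (hprime : ∀ E ∈ Ω, E.IsPrime)
    (hzero : sInf Ω = ⊥)
    (hdomain : ∀ E ∈ Ω,
      (1 : R) ∉ Ideal.map (algebraMap C R) E ∧
      ∀ a b : R, a * b ∈ Ideal.map (algebraMap C R) E →
        a ∈ Ideal.map (algebraMap C R) E ∨ b ∈ Ideal.map (algebraMap C R) E)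
    (hOreRE : ∀ E ∈ Ω, ∀ a s : R, s ∉ Ideal.map (algebraMap C R) E →
      ∃ a' s' : R, s' ∉ Ideal.map (algebraMap C R) E ∧
        a * s' - s * a' ∈ Ideal.map (algebraMap C R) E)
    (hOreLE : ∀ E ∈ Ω, ∀ a s : R, s ∉ Ideal.map (algebraMap C R) E →
      ∃ a' s' : R, s' ∉ Ideal.map (algebraMap C R) E ∧
        s' * a - a' * s ∈ Ideal.map (algebraMap C R) E)
    (hfg : ∀ E ∈ Ω, ∃ (m : ℕ) (v : Fin m → R), ∀ r : R, ∃ z : Fin m → R,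
      (∀ j : Fin m, ∀ w : R, z j * w - w * z j ∈ Ideal.map (algebraMap C R) E) ∧
      r - ∑ j : Fin m, z j * v j ∈ Ideal.map (algebraMap C R) E) :
    ¬ ∃ x y : D, x * y - y * x = 1 := by
  rintro ⟨x, y, hxy⟩
  obtain ⟨A, B, c, c₁, A₁, c₂, B₂, q, p, e, hc, hc₁, hc₂, hq, hp, r1, r2, r3, r4, r5⟩ :=
    aux_extract hOreL φ hφ hfracL hxy
  let bR := Module.Free.chooseBasis C R
  set g := c * (c₁ * (c₂ * (q * p))) with hg
  have hgne : g ≠ 0 :=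
    mul_ne_zero hc (mul_ne_zero hc₁ (mul_ne_zero hc₂ (mul_ne_zero hq hp)))
  have hex : ∃ i, bR.repr g i ≠ 0 := by
    by_contra h
    push_neg at h
    apply hgne
    have h0 : bR.repr g = 0 := DFunLike.ext _ _ h
    have := bR.repr.injective (h0.trans (map_zero bR.repr).symm)
    exact this
  obtain ⟨i, hi⟩ := hex
  have hE : ∃ E ∈ Ω, bR.repr g i ∉ E := by
    by_contra h
    push_neg at h
    have hmem : bR.repr g i ∈ sInf Ω := Submodule.mem_sInf.mpr h
    rw [hzero] at hmem
    exact hi (by simpa using hmem)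
  obtain ⟨E, hEΩ, hEg⟩ := hE
  have hgI : g ∉ Ideal.map (algebraMap C R) E := fun hmem => hEg (aux_repr_mem bR E hmem i)
  have hcI : c ∉ Ideal.map (algebraMap C R) E := fun h => hgI (aux_mul_mem E h _)
  have hc₁I : c₁ ∉ Ideal.map (algebraMap C R) E := fun h =>
    hgI (Ideal.mul_mem_left _ c (aux_mul_mem E h _))
  have hc₂I : c₂ ∉ Ideal.map (algebraMap C R) E := fun h =>
    hgI (Ideal.mul_mem_left _ c (Ideal.mul_mem_left _ c₁ (aux_mul_mem E h _)))
  have hqI : q ∉ Ideal.map (algebraMap C R) E := fun h =>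
    hgI (Ideal.mul_mem_left _ c (Ideal.mul_mem_left _ c₁
      (Ideal.mul_mem_left _ c₂ (aux_mul_mem E h _))))
  have hpI : p ∉ Ideal.map (algebraMap C R) E := fun h =>
    hgI (Ideal.mul_mem_left _ c (Ideal.mul_mem_left _ c₁
      (Ideal.mul_mem_left _ c₂ (Ideal.mul_mem_left _ q h))))
  have hnat : ∀ n : ℕ, n ≠ 0 → IsUnit ((n : R)) := by
    intro n hn
    have h1 : IsUnit ((n : k)) := isUnit_iff_ne_zero.mpr (Nat.cast_ne_zero.mpr hn)
    have h2 := h1.map (algebraMap k R)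
    rwa [map_natCast] at h2
  exact aux_main (Ideal.map (algebraMap C R) E) (fun x hx b => aux_mul_mem E hx b)
    (hdomain E hEΩ).1 (hdomain E hEΩ).2 hnat (hfg E hEΩ)
    hcI hc₁I hc₂I hqI hpI r1 r2 r3 r4 r5
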